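/- Suppose A is a family of infinite subsets of ℕ of regular cardinality that converges to an ultrafilter x and is hereditarily unreapable, and suppose D = {g_β : β < 𝔡} is a <*-dominating family. Then the map sending a ∈ A to some β_a with next(a,·) <* g_{β_a} is (<|A|)-to-one, and hence |A| ≤ 𝔡. -/
import Mathlib


open Set Filter Cardinal

/-- `a ⊆* b` : `a` is almost contained in `b` (mod finite). -/
def almostLE (a b : Set ℕ) : Prop := (a \ b).Finite

/-- `f <* g` : eventual domination mod finite. -/
def domLT (f g : ℕ → ℕ) : Prop := {k | g k ≤ f k}.Finite

/-- The bounding number 𝔟. -/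
noncomputable def bNum : Cardinal :=
  sInf { c | ∃ F : Set (ℕ → ℕ), Cardinal.mk F = c ∧ ∀ g : ℕ → ℕ, ∃ f ∈ F, ¬ domLT f g }

/-- The dominating number 𝔡. -/
noncomputable def dNum : Cardinal :=
  sInf { c | ∃ F : Set (ℕ → ℕ), Cardinal.mk F = c ∧ ∀ g : ℕ → ℕ, ∃ f ∈ F, domLT g f }

/-- `c` reaps the family `A`. -/
def Reaps (c : Set ℕ) (A : Set (Set ℕ)) : Prop :=
  ∀ a ∈ A, (a ∩ c).Infinite ∧ (a \ c).Infinite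

/-- The reaping number 𝔯. -/
noncomputable def rNum : Cardinal :=
  sInf { c | ∃ A : Set (Set ℕ), Cardinal.mk A = c ∧ (∀ a ∈ A, a.Infinite) ∧
    ∀ d : Set ℕ, ¬ Reaps d A }

/-- The splitting number 𝔰. -/
noncomputable def sNum : Cardinal :=
  sInf { c | ∃ A : Set (Set ℕ), Cardinal.mk A = c ∧ ∀ b : Set ℕ, b.Infinite →
    ∃ a ∈ A, (b ∩ a).Infinite ∧ (b \ a).Infinite }

/-- `next(a,k)`, the least element of `a` above `k`. -/
noncomputable def nxt (a : Set ℕ) (k : ℕ) : ℕ := sInf {n | n ∈ a ∧ k < n}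

/-- ℕ*, the Stone–Čech remainder, realized as the space of free ultrafilters on ℕ. -/
abbrev NStar : Type := {x : Ultrafilter ℕ // (Filter.cofinite : Filter ℕ) ≤ ↑x}

/-- For `a ⊆ ℕ`, the basic clopen set `a*` of free ultrafilters containing `a`. -/
def setStar (a : Set ℕ) : Set NStar := {x | a ∈ x.1}

/-- The ideal `I_A = { a ⊆ ℕ : a* ⊆ A }`. -/
def idealOf (A : Set NStar) : Set (Set ℕ) := {a | setStar a ⊆ A}

/-- `A` is almost clopen: the closure of an open set with a unique boundary point. -/
def AlmostClopen (A : Set NStar) : Prop :=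
  (∃ U : Set NStar, IsOpen U ∧ A = closure U) ∧ ∃! x : NStar, x ∈ frontier A

/-- `x` is a tie-point as witnessed by the closed sets `A`, `B`. -/
def TiePoint {X : Type*} [TopologicalSpace X] (x : X) (A B : Set X) : Prop :=
  IsClosed A ∧ IsClosed B ∧ A ∪ B = Set.univ ∧ A ∩ B = {x} ∧
    x ∈ closure (A \ {x}) ∧ x ∈ closure (B \ {x})

/-- An almost clopen set `A` is simple of type `κ`: `I_A` has a strictly ⊆*-increasing,
⊆*-cofinal chain of order type `κ`. -/
def SimpleType (A : Set NStar) (κ : Cardinal) : Prop :=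
  ∃ a : Ordinal → Set ℕ,
    (∀ α, α < κ.ord → a α ∈ idealOf A) ∧
    (∀ α β, α < β → β < κ.ord → almostLE (a α) (a β) ∧ (a β \ a α).Infinite) ∧
    (∀ c ∈ idealOf A, ∃ α, α < κ.ord ∧ almostLE c (a α))

/-- The family `A` converges to the ultrafilter `x`. -/
def Converges (A : Set (Set ℕ)) (x : Ultrafilter ℕ) : Prop :=
  ∀ U ∈ x, Cardinal.mk {a : Set ℕ // a ∈ A ∧ (a \ U).Infinite} < Cardinal.mk A

/-- `A` is hereditarily unreapable. -/
def HeredUnreapable (A : Set (Set ℕ)) : Prop :=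
  ∀ B ⊆ A, (∃ c : Set ℕ, Reaps c B) → Cardinal.mk B < Cardinal.mk A

/-- `f <_x g` for an ultrafilter `x`. -/
def ultLT (x : Ultrafilter ℕ) (f g : ℕ → ℕ) : Prop := {n | f n < g n} ∈ x

/-- A fixed `<*`-increasing `<*`-unbounded family `{f_ξ : ξ < 𝔟}` of strictly increasing
functions. -/
def UnbddChain (f : Ordinal → ℕ → ℕ) : Prop :=
  (∀ ξ, ξ < bNum.ord → StrictMono (f ξ)) ∧
  (∀ η ξ, η < ξ → ξ < bNum.ord → domLT (f η) (f ξ)) ∧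
  (∀ g : ℕ → ℕ, ∃ ξ, ξ < bNum.ord ∧ ¬ domLT (f ξ) g)

/-- `x` is an almost `P_λ`-point. -/
def AlmostPPoint (x : Ultrafilter ℕ) (lam : Cardinal) : Prop :=
  ∀ F : Set (Set ℕ), (∀ U ∈ F, U ∈ x) → Cardinal.mk F < lam →
    ∃ p : Set ℕ, p.Infinite ∧ ∀ U ∈ F, almostLE p U

lemma nxt_spec {a : Set ℕ} (ha : a.Infinite) (k : ℕ) :
    nxt a k ∈ a ∧ k < nxt a k := by
  have hne : {n | n ∈ a ∧ k < n}.Nonempty := by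
    obtain ⟨b, hb, hkb⟩ := ha.exists_gt k
    exact ⟨b, hb, hkb⟩
  exact Nat.sInf_mem hne

/-- A family bounded by a single `h` (in the sense `nxt a <* h`) can be reaped. -/
lemma reap_of_bounded (h : ℕ → ℕ) (B : Set (Set ℕ)) (hBinf : ∀ a ∈ B, a.Infinite)
    (hBd : ∀ a ∈ B, domLT (nxt a) h) : ∃ c : Set ℕ, Reaps c B := by
  -- define the interval endpoints
  set k : ℕ → ℕ := fun n => Nat.rec 0 (fun m km => max (h km) km + 1) n with hk
  have hk0 : k 0 = 0 := rfl
  have hks : ∀ n, k (n + 1) = max (h (k n)) (k n) + 1 := fun n => rfl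
  have hklt : ∀ n, k n < k (n + 1) := by
    intro n; rw [hks]; exact Nat.lt_succ_of_le (le_max_right _ _)
  have hkh : ∀ n, h (k n) < k (n + 1) := by
    intro n; rw [hks]; exact Nat.lt_succ_of_le (le_max_left _ _)
  have hkmono : StrictMono k := strictMono_nat_of_lt_succ hklt
  have hkge : ∀ n, n ≤ k n := fun n => (hkmono.le_apply)
  refine ⟨⋃ n, Set.Ioc (k (2 * n)) (k (2 * n + 1)), ?_⟩
  intro a haB
  have ha := hBinf a haB
  -- eventual bound
  obtain ⟨K, hKbd⟩ : ∃ K, ∀ m, K ≤ m → nxt a m < h m := by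
    obtain ⟨K, hK⟩ := (hBd a haB).bddAbove
    refine ⟨K + 1, fun m hm => ?_⟩
    by_contra hcon
    have hmem : m ∈ {k | h k ≤ nxt a k} := Nat.le_of_not_lt hcon
    have := hK hmem
    omega
  constructor
  · -- a ∩ c infinite
    apply Set.infinite_of_forall_exists_gt
    intro m
    set n := max m K with hn
    have hn1 : K ≤ k (2 * n) := by have := hkge (2 * n); omega
    have hn2 : m ≤ k (2 * n) := by have := hkge (2 * n); omega
    obtain ⟨hmem, hgt⟩ := nxt_spec ha (k (2 * n))
    refine ⟨nxt a (k (2 * n)), ⟨hmem, Set.mem_iUnion.2 ⟨n, hgt, ?_⟩⟩, lt_of_le_of_lt hn2 hgt⟩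
    exact le_of_lt (lt_of_lt_of_le (hKbd _ hn1) (le_of_lt (hkh _)))
  · -- a \ c infinite
    apply Set.infinite_of_forall_exists_gt
    intro m
    set n := max m K with hn
    have hn1 : K ≤ k (2 * n + 1) := by have := hkge (2 * n + 1); omega
    have hn2 : m ≤ k (2 * n + 1) := by have := hkge (2 * n + 1); omega
    obtain ⟨hmem, hgt⟩ := nxt_spec ha (k (2 * n + 1))
    have hub : nxt a (k (2 * n + 1)) < k (2 * n + 1 + 1) :=
      lt_of_lt_of_le (hKbd _ hn1) (le_of_lt (hkh (2 * n + 1)))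
    refine ⟨nxt a (k (2 * n + 1)), ⟨hmem, ?_⟩, lt_of_le_of_lt hn2 hgt⟩
    intro hc
    obtain ⟨_, ⟨p, rfl⟩, hp1, hp2⟩ := hc
    rcases le_or_gt p n with hpn | hpn
    · exact absurd (le_trans hp2 (hkmono.monotone (show 2 * p + 1 ≤ 2 * n + 1 by omega)))
        (not_le.2 hgt)
    · exact absurd (lt_of_lt_of_le hub (hkmono.monotone (show 2 * n + 1 + 1 ≤ 2 * p by omega)))
        (not_lt.2 (le_of_lt hp1))

theorem stmt16 (x : Ultrafilter ℕ) (hx : (Filter.cofinite : Filter ℕ) ≤ ↑x)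
    (A : Set (Set ℕ)) (hAinf : ∀ a ∈ A, a.Infinite)
    (hconv : Converges A x) (hher : HeredUnreapable A)
    (hreg : (Cardinal.mk A).IsRegular)
    (g : Ordinal → ℕ → ℕ)
    (hdom : ∀ h : ℕ → ℕ, ∃ beta, beta < dNum.ord ∧ domLT h (g beta))
    (betaMap : Set ℕ → Ordinal)
    (hbeta : ∀ a ∈ A, betaMap a < dNum.ord ∧ domLT (nxt a) (g (betaMap a))) :
    (∀ beta0 : Ordinal,
      Cardinal.mk {a : Set ℕ // a ∈ A ∧ betaMap a = beta0} < Cardinal.mk A) ∧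
    Cardinal.mk A ≤ dNum := by
  -- Every "bounded" subfamily of A is small.
  have key : ∀ h : ℕ → ℕ, Cardinal.mk {a : Set ℕ // a ∈ A ∧ domLT (nxt a) h} < Cardinal.mk A := by
    intro h
    set B : Set (Set ℕ) := {a | a ∈ A ∧ domLT (nxt a) h} with hB
    have hBA : B ⊆ A := fun a ha => ha.1
    have hreap : ∃ c, Reaps c B :=
      reap_of_bounded h B (fun a ha => hAinf a ha.1) (fun a ha => ha.2)
    exact hher B hBA hreap
  have part1 : ∀ beta0 : Ordinal,
      Cardinal.mk {a : Set ℕ // a ∈ A ∧ betaMap a = beta0} < Cardinal.mk A := by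
    intro beta0
    refine lt_of_le_of_lt ?_ (key (g beta0))
    refine Cardinal.mk_le_of_injective (f := fun p =>
      (⟨p.1, p.2.1, by have h2 := (hbeta p.1 p.2.1).2; rw [p.2.2] at h2; exact h2⟩ :
        {a : Set ℕ // a ∈ A ∧ domLT (nxt a) (g beta0)})) ?_
    intro p q hpq
    have h1 := congrArg Subtype.val hpq
    exact Subtype.ext h1
  refine ⟨part1, ?_⟩
  by_contra hcon
  have hdlt : dNum < Cardinal.mk A := not_le.1 hcon
  -- the image family
  set V : Set (ℕ → ℕ) := g '' Set.Iio dNum.ord with hV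
  have hVcard : Cardinal.mk V ≤ dNum := by
    have h1 : Cardinal.lift.{1} (Cardinal.mk V) ≤ Cardinal.lift.{0} (Cardinal.mk (Set.Iio dNum.ord)) :=
      Cardinal.mk_image_le_lift
    rw [Ordinal.mk_Iio_ordinal, Cardinal.card_ord, Cardinal.lift_lift] at h1
    exact_mod_cast Cardinal.lift_le.1 h1
  set F : A → V := fun a => ⟨g (betaMap a.1), ⟨betaMap a.1, (hbeta a.1 a.2).1, rfl⟩⟩ with hF
  have hsum : Cardinal.mk A = Cardinal.sum (fun v : V => Cardinal.mk (F ⁻¹' {v})) := by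
    rw [← Cardinal.mk_sigma]
    exact (Cardinal.mk_congr (Equiv.sigmaFiberEquiv F)).symm
  have hfib : ∀ v : V, Cardinal.mk (F ⁻¹' {v}) < Cardinal.mk A := by
    intro v
    refine lt_of_le_of_lt ?_ (key v.1)
    refine Cardinal.mk_le_of_injective (f := fun p =>
      (⟨p.1.1, p.1.2, ?_⟩ : {a : Set ℕ // a ∈ A ∧ domLT (nxt a) v.1})) ?_
    · have : g (betaMap p.1.1) = v.1 := congrArg Subtype.val p.2
      exact this ▸ (hbeta p.1.1 p.1.2).2
    · intro p q hpq
      have h1 := congrArg Subtype.val hpq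
      exact Subtype.ext (Subtype.ext h1)
  have : Cardinal.mk A < Cardinal.mk A := by
    calc Cardinal.mk A = Cardinal.sum (fun v : V => Cardinal.mk (F ⁻¹' {v})) := hsum
    _ < Cardinal.mk A :=
      Cardinal.sum_lt_of_isRegular hreg (lt_of_le_of_lt hVcard hdlt) hfib
  exact absurd this (lt_irrefl _)
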